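/- arXiv:1807.04530 — 3 statements merged into one kernel-verified Lean document; each statement's English description precedes it below -/
import Mathlib

section
/- Let A ∈ Sym(n,ℝ) have pairwise distinct eigenvalues λ_1, …, λ_n. Then the distance from A to the cone C(Δ) of symmetric matrices with a repeated eigenvalue satisfies min_{B ∈ C(Δ)} ‖A − B‖ = min_{1 ≤ i < j ≤ n} |λ_i − λ_j| / √2, and this infimum is attained. -/
open MeasureTheory Matrix Polynomial
open scoped Classical ENNReal

noncomputable section

/-- Frobenius norm `‖A‖ = √tr(AᵀA)` on matrices. -/
def frobNorm {n : ℕ} (A : Matrix (Fin n) (Fin n) ℝ) : ℝ :=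
  Real.sqrt (Matrix.trace (Aᵀ * A))

/-- The cone `C(Δ)` over the discriminant: real symmetric matrices having at least
two equal eigenvalues (a root of the characteristic polynomial of multiplicity ≥ 2). -/
def coneDelta (n : ℕ) : Set (Matrix (Fin n) (Fin n) ℝ) :=
  {B | B.IsSymm ∧ ∃ μ : ℝ, 2 ≤ B.charpoly.rootMultiplicity μ}

/- ### Auxiliary lemmas -/

lemma aux_charpoly_conj {n : ℕ} (U M V : Matrix (Fin n) (Fin n) ℝ) (h1 : U*V = 1)
    (h2 : V*U = 1) : (U*M*V).charpoly = M.charpoly := by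
  have key : charmatrix (U*M*V) = (U.map C) * charmatrix M * (V.map C) := by
    simp only [charmatrix, RingHom.mapMatrix_apply, Matrix.mul_sub, Matrix.sub_mul,
      Matrix.map_mul]
    congr 1
    rw [mul_assoc, (scalar_commute (X : ℝ[X]) (Commute.all X) (V.map C)).eq,
      ← mul_assoc, ← Matrix.map_mul, h1]
    simp
  have hdet : (V.map (C : ℝ →+* ℝ[X])).det * (U.map (C : ℝ →+* ℝ[X])).det = 1 := by
    rw [← Matrix.det_mul, ← Matrix.map_mul, h2]
    simp
  rw [Matrix.charpoly, key, Matrix.det_mul, Matrix.det_mul, Matrix.charpoly, mul_comm,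
    ← mul_assoc, hdet, one_mul]

lemma aux_charpoly_diag {n : ℕ} (d : Fin n → ℝ) :
    (diagonal d).charpoly = ∏ i, (X - C (d i)) := by
  rw [charpoly_of_upperTriangular _ (blockTriangular_diagonal d)]
  simp

lemma aux_rootMult {n : ℕ} (d : Fin n → ℝ) (μ : ℝ) :
    (∏ i, (X - C (d i))).rootMultiplicity μ
      = (Finset.univ.filter (fun i => d i = μ)).card := by
  have h1 : (∏ i, (X - C (d i))) = ((Finset.univ.val.map d).map fun a => X - C a).prod := by
    simp [Finset.prod_eq_multiset_prod, Multiset.map_map, Function.comp_def]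
  rw [← Polynomial.count_roots, h1, Polynomial.roots_multiset_prod_X_sub_C,
    Multiset.count_map]
  simp [Finset.card_filter, eq_comm, Finset.filter]

lemma aux_spectral {n : ℕ} {B : Matrix (Fin n) (Fin n) ℝ} (hB : B.IsHermitian) :
    B = (hB.eigenvectorUnitary : Matrix (Fin n) (Fin n) ℝ) * diagonal hB.eigenvalues
      * (hB.eigenvectorUnitary : Matrix (Fin n) (Fin n) ℝ)ᵀ := by
  have := hB.spectral_theorem
  simpa [Matrix.star_eq_conjTranspose] using this

lemma aux_unitary_mul {n : ℕ} {B : Matrix (Fin n) (Fin n) ℝ} (hB : B.IsHermitian) :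
    (hB.eigenvectorUnitary : Matrix (Fin n) (Fin n) ℝ) *
      (hB.eigenvectorUnitary : Matrix (Fin n) (Fin n) ℝ)ᵀ = 1 := by
  have := Unitary.mul_star_self_of_mem hB.eigenvectorUnitary.2
  simpa [Matrix.star_eq_conjTranspose] using this

lemma aux_unitary_mul' {n : ℕ} {B : Matrix (Fin n) (Fin n) ℝ} (hB : B.IsHermitian) :
    (hB.eigenvectorUnitary : Matrix (Fin n) (Fin n) ℝ)ᵀ *
      (hB.eigenvectorUnitary : Matrix (Fin n) (Fin n) ℝ) = 1 := by
  have := Unitary.star_mul_self_of_mem hB.eigenvectorUnitary.2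
  simpa [Matrix.star_eq_conjTranspose] using this

lemma aux_charpoly_herm {n : ℕ} {B : Matrix (Fin n) (Fin n) ℝ} (hB : B.IsHermitian) :
    B.charpoly = ∏ i, (X - C (hB.eigenvalues i)) := by
  conv_lhs => rw [aux_spectral hB]
  rw [aux_charpoly_conj _ _ _ (aux_unitary_mul hB) (aux_unitary_mul' hB), aux_charpoly_diag]

lemma aux_bessel {n : ℕ} (m u v : Fin n → ℝ) (hu : ∑ i, u i ^ 2 = 1)
    (hv : ∑ i, v i ^ 2 = 1) (huv : ∑ i, u i * v i = 0) :
    (∑ i, m i * u i) ^ 2 + (∑ i, m i * v i) ^ 2 ≤ ∑ i, m i ^ 2 := by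
  set a := ∑ i, m i * u i with ha
  set b := ∑ i, m i * v i with hb
  have h0 : 0 ≤ ∑ i, (m i - a * u i - b * v i) ^ 2 :=
    Finset.sum_nonneg fun i _ => sq_nonneg _
  have hexp : ∑ i, (m i - a * u i - b * v i) ^ 2
      = ∑ i, m i ^ 2 - a ^ 2 - b ^ 2 := by
    have h1 : ∀ i ∈ Finset.univ, (m i - a * u i - b * v i) ^ 2 =
        m i ^ 2 + a ^ 2 * u i ^ 2 + b ^ 2 * v i ^ 2 - (2 * a) * (m i * u i)
          - (2 * b) * (m i * v i) + (2 * (a * b)) * (u i * v i) := fun i _ => by ring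
    rw [Finset.sum_congr rfl h1]
    simp only [Finset.sum_add_distrib, Finset.sum_sub_distrib, ← Finset.mul_sum,
      hu, hv, huv, ← ha, ← hb]
    ring
  linarith

lemma aux_comb {n : ℕ} (d c : Fin n → ℝ) (G : ℝ) (hd : ∀ k, 0 ≤ d k)
    (hpair : ∀ k l, k ≠ l → G ≤ d k + d l) (hc0 : ∀ k, 0 ≤ c k) (hc1 : ∀ k, c k ≤ 1)
    (hsum : ∑ k, c k = 2) : G ≤ ∑ k, d k * c k := by
  by_cases hall : ∀ k, G / 2 ≤ d k
  · have h1 : ∑ k, (G / 2) * c k ≤ ∑ k, d k * c k :=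
      Finset.sum_le_sum fun k _ => mul_le_mul_of_nonneg_right (hall k) (hc0 k)
    rw [← Finset.mul_sum, hsum] at h1
    linarith
  · push_neg at hall
    obtain ⟨k0, hk0⟩ := hall
    have hsplit : ∑ k, d k * c k
        = d k0 * c k0 + ∑ k ∈ Finset.univ.erase k0, d k * c k :=
      (Finset.add_sum_erase _ _ (Finset.mem_univ k0)).symm
    have hcsplit : ∑ k ∈ Finset.univ.erase k0, c k = 2 - c k0 := by
      have := (Finset.add_sum_erase _ c (Finset.mem_univ k0)).symm
      rw [hsum] at this; linarith
    have hrest : (G - d k0) * (2 - c k0) ≤ ∑ k ∈ Finset.univ.erase k0, d k * c k := by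
      rw [← hcsplit, Finset.mul_sum]
      refine Finset.sum_le_sum fun k hk => ?_
      have hne : k ≠ k0 := Finset.ne_of_mem_erase hk
      have := hpair k k0 hne
      exact mul_le_mul_of_nonneg_right (by linarith) (hc0 k)
    have h1 := hc1 k0
    have h2 := hc0 k0
    have h3 := hd k0
    nlinarith [hsplit, hrest]

lemma aux_trace_sq {n : ℕ} (M : Matrix (Fin n) (Fin n) ℝ) :
    Matrix.trace (Mᵀ * M) = ∑ i, ∑ j, (M i j) ^ 2 := by
  rw [Finset.sum_comm]
  simp [Matrix.trace, Matrix.mul_apply, Matrix.diag, sq]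

lemma aux_trace_conj {n : ℕ} (U N : Matrix (Fin n) (Fin n) ℝ)
    (h1 : U * Uᵀ = 1) (h2 : Uᵀ * U = 1) :
    Matrix.trace ((Uᵀ * N * U)ᵀ * (Uᵀ * N * U)) = Matrix.trace (Nᵀ * N) := by
  have key : (Uᵀ * N * U)ᵀ * (Uᵀ * N * U) = Uᵀ * (Nᵀ * N) * U := by
    simp only [Matrix.transpose_mul, Matrix.transpose_transpose, Matrix.mul_assoc]
    rw [show U * (Uᵀ * (N * U)) = N * U by rw [← Matrix.mul_assoc, h1, Matrix.one_mul]]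
  rw [key, Matrix.trace_mul_cycle, ← Matrix.mul_assoc, h1, Matrix.one_mul]

lemma aux_dot {n : ℕ} (U : Matrix (Fin n) (Fin n) ℝ) (h1 : U * Uᵀ = 1) (a b : Fin n → ℝ) :
    (Uᵀ *ᵥ a) ⬝ᵥ (Uᵀ *ᵥ b) = a ⬝ᵥ b := by
  rw [Matrix.mulVec_transpose, Matrix.dotProduct_mulVec, Matrix.vecMul_vecMul, h1,
    Matrix.vecMul_one]

set_option maxHeartbeats 2000000 in
/-- for a symmetric matrix `A` with pairwise distinct eigenvalues
`λ_1, …, λ_n`, the distance from `A` to `C(Δ)` is attained and equals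
`min_{i<j} |λ_i - λ_j| / √2`. -/
theorem dist_to_coneDelta {n : ℕ} (hn : 2 ≤ n) (A : Matrix (Fin n) (Fin n) ℝ)
    (hA : A.IsHermitian) (hinj : Function.Injective hA.eigenvalues) :
    IsLeast {r : ℝ | ∃ B ∈ coneDelta n, r = frobNorm (A - B)}
      (sInf {r : ℝ | ∃ i j : Fin n, i < j ∧
        r = |hA.eigenvalues i - hA.eigenvalues j| / Real.sqrt 2}) := by
  classical
  set lam := hA.eigenvalues with hlam
  set S2 := {r : ℝ | ∃ i j : Fin n, i < j ∧ r = |lam i - lam j| / Real.sqrt 2} with hS2def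
  have hS2fin : S2.Finite :=
    Set.Finite.subset
      (Set.finite_range fun p : Fin n × Fin n => |lam p.1 - lam p.2| / Real.sqrt 2)
      (by rintro r ⟨i, j, _, rfl⟩; exact ⟨(i, j), rfl⟩)
  have hS2ne : S2.Nonempty :=
    ⟨|lam ⟨0, by omega⟩ - lam ⟨1, by omega⟩| / Real.sqrt 2,
      ⟨0, by omega⟩, ⟨1, by omega⟩, Fin.mk_lt_mk.2 (by omega), rfl⟩
  set g := sInf S2 with hgdef
  have hgmem : g ∈ S2 := hS2ne.csInf_mem hS2fin
  have hglb : ∀ r ∈ S2, g ≤ r := fun r hr => csInf_le hS2fin.bddBelow hr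
  obtain ⟨i0, j0, hij0, hgeq⟩ := hgmem
  have hgnn : 0 ≤ g := hgeq ▸ div_nonneg (abs_nonneg _) (Real.sqrt_nonneg 2)
  have hgap : ∀ k l : Fin n, k ≠ l → g ≤ |lam k - lam l| / Real.sqrt 2 := by
    intro k l hkl
    rcases hkl.lt_or_gt with h | h
    · exact hglb _ ⟨k, l, h, rfl⟩
    · rw [abs_sub_comm]; exact hglb _ ⟨l, k, h, rfl⟩
  have hgsq : ∀ k l : Fin n, k ≠ l → g ^ 2 ≤ (lam k - lam l) ^ 2 / 2 := by
    intro k l hkl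
    have h1 := hgap k l hkl
    have h2 : (|lam k - lam l| / Real.sqrt 2) ^ 2 = (lam k - lam l) ^ 2 / 2 := by
      rw [div_pow, sq_abs, Real.sq_sqrt (by norm_num : (0:ℝ) ≤ 2)]
    calc g ^ 2 ≤ (|lam k - lam l| / Real.sqrt 2) ^ 2 := pow_le_pow_left₀ hgnn h1 2
      _ = _ := h2
  set U := (hA.eigenvectorUnitary : Matrix (Fin n) (Fin n) ℝ) with hUdef
  have hU1 : U * Uᵀ = 1 := aux_unitary_mul hA
  have hU2 : Uᵀ * U = 1 := aux_unitary_mul' hA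
  have hspec : A = U * diagonal lam * Uᵀ := aux_spectral hA
  constructor
  · -- the minimum is attained by an explicit perturbation of `A`
    set μ0 := (lam i0 + lam j0) / 2 with hμ0
    set d : Fin n → ℝ := fun k => if k = i0 ∨ k = j0 then μ0 else lam k with hd
    have hdi0 : d i0 = μ0 := by simp [hd]
    have hdj0 : d j0 = μ0 := by simp [hd]
    refine ⟨U * diagonal d * Uᵀ, ⟨?_, μ0, ?_⟩, ?_⟩
    · show (U * diagonal d * Uᵀ)ᵀ = U * diagonal d * Uᵀ
      rw [Matrix.transpose_mul, Matrix.transpose_mul, Matrix.transpose_transpose,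
        Matrix.diagonal_transpose, Matrix.mul_assoc]
    · rw [aux_charpoly_conj _ _ _ hU1 hU2, aux_charpoly_diag, aux_rootMult]
      have hsub : ({i0, j0} : Finset (Fin n)) ⊆
          Finset.univ.filter (fun k => d k = μ0) := by
        intro k hk
        rcases Finset.mem_insert.1 hk with rfl | hk
        · simp [hdi0]
        · rcases Finset.mem_singleton.1 hk with rfl
          simp [hdj0]
      calc 2 = ({i0, j0} : Finset (Fin n)).card := (Finset.card_pair (ne_of_lt hij0)).symm
        _ ≤ _ := Finset.card_le_card hsub
    · -- the distance to this matrix is exactly `g`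
      have hAB : A - U * diagonal d * Uᵀ
          = U * diagonal (fun k => lam k - d k) * Uᵀ := by
        conv_lhs => rw [hspec]
        rw [← Matrix.sub_mul, ← Matrix.mul_sub, Matrix.diagonal_sub]
      have htr := aux_trace_conj Uᵀ (diagonal (fun k => lam k - d k))
        (by rwa [Matrix.transpose_transpose]) (by rwa [Matrix.transpose_transpose])
      rw [Matrix.transpose_transpose] at htr
      have hsum : Matrix.trace ((diagonal (fun k => lam k - d k))ᵀ *
          diagonal (fun k => lam k - d k)) = (lam i0 - lam j0) ^ 2 / 2 := by
        rw [Matrix.diagonal_transpose, Matrix.diagonal_mul_diagonal, Matrix.trace_diagonal]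
        have hzero : ∀ kk ∈ Finset.univ, kk ∉ ({i0, j0} : Finset (Fin n)) →
            (lam kk - d kk) * (lam kk - d kk) = 0 := by
          intro kk _ hkk
          simp only [Finset.mem_insert, Finset.mem_singleton, not_or] at hkk
          simp [hd, hkk.1, hkk.2]
        rw [← Finset.sum_subset (Finset.subset_univ ({i0, j0} : Finset (Fin n))) hzero,
          Finset.sum_pair (ne_of_lt hij0), hdi0, hdj0, hμ0]
        ring
      rw [hgeq, frobNorm, hAB, htr, hsum, Real.sqrt_div (sq_nonneg _),
        Real.sqrt_sq_eq_abs]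
  · -- lower bound
    rintro r ⟨B, ⟨hBsymm, μ, hmul⟩, rfl⟩
    have hB : B.IsHermitian := hBsymm
    rw [aux_charpoly_herm hB, aux_rootMult] at hmul
    obtain ⟨k, hk, l, hl, hkl⟩ := Finset.one_lt_card.1 (by omega :
      1 < (Finset.univ.filter (fun i => hB.eigenvalues i = μ)).card)
    rw [Finset.mem_filter] at hk hl
    set u : Fin n → ℝ := ⇑(hB.eigenvectorBasis k) with hu
    set v : Fin n → ℝ := ⇑(hB.eigenvectorBasis l) with hv
    have hBu : B *ᵥ u = μ • u := by rw [hu, hB.mulVec_eigenvectorBasis, hk.2]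
    have hBv : B *ᵥ v = μ • v := by rw [hv, hB.mulVec_eigenvectorBasis, hl.2]
    have hnu : ∑ i, u i * u i = 1 := by
      have h := hB.eigenvectorBasis.orthonormal.1 k
      have h2 := real_inner_self_eq_norm_sq (hB.eigenvectorBasis k)
      rw [h, PiLp.inner_apply] at h2
      simp only [RCLike.inner_apply, conj_trivial, one_pow] at h2
      simpa [hu] using h2
    have hnv : ∑ i, v i * v i = 1 := by
      have h := hB.eigenvectorBasis.orthonormal.1 l
      have h2 := real_inner_self_eq_norm_sq (hB.eigenvectorBasis l)
      rw [h, PiLp.inner_apply] at h2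
      simp only [RCLike.inner_apply, conj_trivial, one_pow] at h2
      simpa [hv] using h2
    have huv : ∑ i, u i * v i = 0 := by
      have h := hB.eigenvectorBasis.orthonormal.2 hkl
      simpa [PiLp.inner_apply, hu, hv, mul_comm] using h
    set x := Uᵀ *ᵥ u with hx
    set y := Uᵀ *ᵥ v with hy
    have hx2 : ∑ i, x i ^ 2 = 1 := by
      have := aux_dot U hU1 u u
      rw [← hx] at this
      simpa [dotProduct, sq, hnu] using this
    have hy2 : ∑ i, y i ^ 2 = 1 := by
      have := aux_dot U hU1 v v
      rw [← hy] at this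
      simpa [dotProduct, sq, hnv] using this
    have hxy : ∑ i, x i * y i = 0 := by
      have := aux_dot U hU1 u v
      rw [← hx, ← hy] at this
      simpa [dotProduct, huv] using this
    set M' := Uᵀ * (A - B) * U with hM'
    have htr : Matrix.trace (M'ᵀ * M') = Matrix.trace ((A - B)ᵀ * (A - B)) :=
      aux_trace_conj U (A - B) hU1 hU2
    -- eigen-equation in the coordinates of `A`
    have hMv : ∀ (w z : Fin n → ℝ), B *ᵥ w = μ • w → z = Uᵀ *ᵥ w →
        M' *ᵥ z = fun i => (lam i - μ) * z i := by
      intro w z hw hz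
      have h1 : M' *ᵥ z = Uᵀ *ᵥ ((A - B) *ᵥ w) := by
        rw [hz, Matrix.mulVec_mulVec, Matrix.mul_assoc (Uᵀ * (A - B)) U Uᵀ, hU1,
          Matrix.mul_one, ← Matrix.mulVec_mulVec]
      have h2 : (A - B) *ᵥ w = A *ᵥ w - μ • w := by
        rw [Matrix.sub_mulVec, hw]
      have h3 : Uᵀ *ᵥ (A *ᵥ w) = diagonal lam *ᵥ z := by
        rw [Matrix.mulVec_mulVec, hz, Matrix.mulVec_mulVec]
        congr 1
        conv_lhs => rw [hspec]
        rw [← Matrix.mul_assoc, ← Matrix.mul_assoc, hU2, Matrix.one_mul]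
      rw [h1, h2, Matrix.mulVec_sub, h3, Matrix.mulVec_smul, ← hz]
      ext i
      simp only [Pi.sub_apply, Pi.smul_apply, smul_eq_mul, Matrix.mulVec_diagonal]
      ring
    have hMx : M' *ᵥ x = fun i => (lam i - μ) * x i := hMv u x hBu hx
    have hMy : M' *ᵥ y = fun i => (lam i - μ) * y i := hMv v y hBv hy
    -- row-wise Bessel inequality
    have hrows : ∑ i, (((lam i - μ) * x i) ^ 2 + ((lam i - μ) * y i) ^ 2)
        ≤ Matrix.trace (M'ᵀ * M') := by
      rw [aux_trace_sq]
      refine Finset.sum_le_sum fun i _ => ?_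
      have hb := aux_bessel (fun j => M' i j) x y hx2 hy2 hxy
      have e1 : ∑ j, M' i j * x j = (lam i - μ) * x i := by
        have := congrFun hMx i
        simpa [Matrix.mulVec, dotProduct] using this
      have e2 : ∑ j, M' i j * y j = (lam i - μ) * y i := by
        have := congrFun hMy i
        simpa [Matrix.mulVec, dotProduct] using this
      rw [e1, e2] at hb
      exact hb
    -- coefficients are at most 1
    have hck : ∀ k : Fin n, x k ^ 2 + y k ^ 2 ≤ 1 := by
      intro k
      have hb := aux_bessel (Pi.single k 1) x y hx2 hy2 hxy
      have e1 : ∑ j, (Pi.single k 1 : Fin n → ℝ) j * x j = x k := by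
        simp [Pi.single_apply]
      have e2 : ∑ j, (Pi.single k 1 : Fin n → ℝ) j * y j = y k := by
        simp [Pi.single_apply]
      have e3 : ∑ j, ((Pi.single k 1 : Fin n → ℝ) j) ^ 2 = 1 := by
        simp [Pi.single_apply, ite_pow]
      rw [e1, e2, e3] at hb
      exact hb
    have hcomb : g ^ 2 ≤ ∑ k, (lam k - μ) ^ 2 * (x k ^ 2 + y k ^ 2) := by
      refine aux_comb _ _ _ (fun k => sq_nonneg _) ?_ (fun k => by positivity) hck ?_
      · intro a b hab
        have := hgsq a b hab
        nlinarith [sq_nonneg ((lam a - μ) + (lam b - μ)), sq_nonneg ((lam a - μ) - (lam b - μ))]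
      · rw [Finset.sum_add_distrib, hx2, hy2]; norm_num
    have heq : ∑ k, (lam k - μ) ^ 2 * (x k ^ 2 + y k ^ 2)
        = ∑ i, (((lam i - μ) * x i) ^ 2 + ((lam i - μ) * y i) ^ 2) :=
      Finset.sum_congr rfl fun i _ => by ring
    have hfinal : g ^ 2 ≤ Matrix.trace ((A - B)ᵀ * (A - B)) := by
      rw [← htr]
      calc g ^ 2 ≤ _ := hcomb
        _ = _ := heq
        _ ≤ _ := hrows
    have htrnn : 0 ≤ Matrix.trace ((A - B)ᵀ * (A - B)) := by
      rw [aux_trace_sq]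
      exact Finset.sum_nonneg fun i _ => Finset.sum_nonneg fun j _ => sq_nonneg _
    exact (Real.le_sqrt hgnn htrnn).2 hfinal
end
end

section
/- Let A ∈ Sym(n,ℝ) with ‖A‖ = 1 have pairwise distinct eigenvalues λ_1, …, λ_n. Then the spherical (geodesic) distance from A to the discriminant Δ satisfies min_{B ∈ Δ} arccos(tr(AB)) = arcsin( min_{1 ≤ i < j ≤ n} |λ_i − λ_j| / √2 ). -/
open MeasureTheory Matrix Polynomial
open scoped Classical ENNReal

noncomputable section

/-- `A` has at least two equal eigenvalues. -/
def hasRepEig {n : ℕ} (A : Matrix (Fin n) (Fin n) ℝ) : Prop :=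
  ∃ μ : ℝ, 2 ≤ A.charpoly.rootMultiplicity μ

/-- The discriminant `Δ`: unit-Frobenius-norm real symmetric matrices with a
repeated eigenvalue. -/
def discSet (n : ℕ) : Set (Matrix (Fin n) (Fin n) ℝ) :=
  {A | A.IsSymm ∧ frobNorm A = 1 ∧ hasRepEig A}

namespace SphericalDistAux

variable {n : ℕ}

lemma charpoly_conj' (P Q M : Matrix (Fin n) (Fin n) ℝ) (hPQ : P * Q = 1) :
    (P * M * Q).charpoly = M.charpoly := by
  have hmap : (P.map (C : ℝ →+* ℝ[X]) : Matrix (Fin n) (Fin n) ℝ[X]) * Q.map C = 1 := by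
    have := congrArg (fun M : Matrix (Fin n) (Fin n) ℝ =>
      (C : ℝ →+* ℝ[X]).mapMatrix M) hPQ
    simpa using this
  have hcomm : ∀ R : Matrix (Fin n) (Fin n) ℝ[X],
      R * Matrix.scalar (Fin n) (X : ℝ[X]) = Matrix.scalar (Fin n) (X : ℝ[X]) * R :=
    fun R => ((scalar_commute (X : ℝ[X]) (fun r' => mul_comm _ _) R)).symm
  have hcm : charmatrix (P * M * Q) = (P.map C) * charmatrix M * (Q.map C) := by
    unfold charmatrix
    rw [Matrix.mul_sub, Matrix.sub_mul]
    congr 1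
    · rw [hcomm (P.map C), Matrix.mul_assoc, hmap, Matrix.mul_one]
    · simp only [RingHom.mapMatrix_apply, Matrix.map_mul]
  rw [Matrix.charpoly, Matrix.charpoly, hcm, Matrix.det_mul, Matrix.det_mul]
  have hdet : (P.map (C : ℝ →+* ℝ[X])).det * (Q.map C).det = 1 := by
    rw [← Matrix.det_mul, hmap, Matrix.det_one]
  calc (P.map (C : ℝ →+* ℝ[X])).det * M.charmatrix.det * (Q.map C).det
      = M.charmatrix.det * ((P.map (C : ℝ →+* ℝ[X])).det * (Q.map C).det) := by ring
    _ = M.charmatrix.det := by rw [hdet, mul_one]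

lemma charpoly_diagonal' (d : Fin n → ℝ) :
    (diagonal d).charpoly = ∏ i, ((X : ℝ[X]) - C (d i)) := by
  have hcm : charmatrix (diagonal d) = diagonal (fun i => (X : ℝ[X]) - C (d i)) := by
    ext i j
    by_cases h : i = j
    · subst h; simp [charmatrix_apply_eq]
    · rw [charmatrix_apply_ne _ _ _ h, diagonal_apply_ne _ h, diagonal_apply_ne _ h]; simp
  rw [Matrix.charpoly, hcm, det_diagonal]

lemma rootMult_diagonal (d : Fin n → ℝ) (μ : ℝ) :
    (diagonal d).charpoly.rootMultiplicity μ = Multiset.count μ (Finset.univ.val.map d) := by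
  rw [charpoly_diagonal', ← Polynomial.count_roots]
  have : ∏ i, ((X : ℝ[X]) - C (d i)) = ((Finset.univ.val.map d).map fun a => X - C a).prod := by
    rw [Multiset.map_map]; rfl
  rw [this, Polynomial.roots_multiset_prod_X_sub_C]

lemma count_ge_two_iff (d : Fin n → ℝ) (μ : ℝ) :
    2 ≤ Multiset.count μ (Finset.univ.val.map d) ↔ ∃ i j : Fin n, i ≠ j ∧ d i = μ ∧ d j = μ := by
  rw [Multiset.count_map]
  have : Multiset.filter (fun a => μ = d a) Finset.univ.val
      = (Finset.univ.filter (fun a => μ = d a)).val := (Finset.filter_val _ _).symm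
  rw [this]
  have h2 : (2 : ℕ) ≤ (Finset.univ.filter (fun a => μ = d a)).card ↔
      1 < (Finset.univ.filter (fun a => μ = d a)).card := by omega
  rw [show (Finset.univ.filter (fun a => μ = d a)).val.card
      = (Finset.univ.filter (fun a => μ = d a)).card from rfl, h2, Finset.one_lt_card]
  constructor
  · rintro ⟨a, ha, b, hb, hab⟩
    simp only [Finset.mem_filter, Finset.mem_univ, true_and] at ha hb
    exact ⟨a, b, hab, ha.symm, hb.symm⟩
  · rintro ⟨i, j, hij, hi, hj⟩
    exact ⟨i, by simp [hi.symm], j, by simp [hj.symm], hij⟩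

lemma trace_diag_conj (W : Matrix (Fin n) (Fin n) ℝ) (d e : Fin n → ℝ) :
    trace (diagonal d * (W * diagonal e * Wᵀ))
      = ∑ k, ∑ i, d k * e i * (W k i)^2 := by
  rw [Matrix.trace]
  refine Finset.sum_congr rfl fun k _ => ?_
  rw [Matrix.diag_apply, Matrix.diagonal_mul, Matrix.mul_apply, Finset.mul_sum]
  refine Finset.sum_congr rfl fun i _ => ?_
  simp only [Matrix.mul_diagonal, Matrix.transpose_apply]
  ring

lemma trace_conj_mul (U V : Matrix (Fin n) (Fin n) ℝ) (d e : Fin n → ℝ) :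
    trace (U * diagonal d * Uᵀ * (V * diagonal e * Vᵀ))
      = ∑ k, ∑ i, d k * e i * ((Uᵀ * V) k i)^2 := by
  have h1 : U * diagonal d * Uᵀ * (V * diagonal e * Vᵀ)
      = U * (diagonal d * Uᵀ * (V * diagonal e * Vᵀ)) := by
    simp only [Matrix.mul_assoc]
  rw [h1, Matrix.trace_mul_comm]
  have h2 : diagonal d * Uᵀ * (V * diagonal e * Vᵀ) * U
      = diagonal d * ((Uᵀ * V) * diagonal e * (Uᵀ * V)ᵀ) := by
    simp only [Matrix.transpose_mul, Matrix.transpose_transpose, Matrix.mul_assoc]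
  rw [h2, trace_diag_conj]

lemma trace_conj_mul_same (U : Matrix (Fin n) (Fin n) ℝ) (hU : Uᵀ * U = 1) (d e : Fin n → ℝ) :
    trace (U * diagonal d * Uᵀ * (U * diagonal e * Uᵀ)) = ∑ k, d k * e k := by
  rw [trace_conj_mul, hU]
  refine Finset.sum_congr rfl fun k _ => ?_
  rw [Finset.sum_eq_single k]
  · simp [Matrix.one_apply]
  · intro b _ hb; simp [Matrix.one_apply_ne (Ne.symm hb)]
  · simp

lemma sum_pair_support {p q : Fin n} (hpq : p ≠ q) (f : Fin n → ℝ)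
    (hf : ∀ k, k ≠ p → k ≠ q → f k = 0) : ∑ k, f k = f p + f q := by
  rw [← Finset.sum_pair hpq]
  symm
  apply Finset.sum_subset (Finset.subset_univ _)
  intro x _ hx
  simp only [Finset.mem_insert, Finset.mem_singleton] at hx
  push_neg at hx
  exact hf x hx.1 hx.2

lemma key_scalar (lam nu : Fin n → ℝ) (h1 : ∑ k, (lam k)^2 = 1) (h2 : ∑ k, (nu k)^2 = 1)
    {p q : Fin n} (hpq : p ≠ q) (hnu : nu p = nu q) {G : ℝ} (hG0 : 0 ≤ G)
    (hG : G ≤ |lam p - lam q| / Real.sqrt 2) :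
    ∑ k, lam k * nu k ≤ Real.sqrt (1 - G^2) := by
  set m := (lam p + lam q) / 2 with hm
  set P : Fin n → ℝ := fun k => if k = p ∨ k = q then m else lam k with hP
  have hPp : P p = m := by simp [hP]
  have hPq : P q = m := by simp [hP]
  have hPk : ∀ k, k ≠ p → k ≠ q → P k = lam k := by
    intro k h1 h2; simp [hP, h1, h2]
  have hA : ∑ k, lam k * nu k = ∑ k, P k * nu k := by
    have hdiff : ∑ k, (lam k * nu k - P k * nu k) = 0 := by
      rw [sum_pair_support hpq _ (fun k hk1 hk2 => by rw [hPk k hk1 hk2]; ring)]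
      rw [hPp, hPq, hnu, hm]; ring
    rw [Finset.sum_sub_distrib] at hdiff
    linarith
  have hB : ∑ k, (P k)^2 = 1 - (lam p - lam q)^2 / 2 := by
    have hdiff : ∑ k, ((P k)^2 - (lam k)^2) = (m^2 - lam p^2) + (m^2 - lam q^2) := by
      rw [sum_pair_support hpq _ (fun k hk1 hk2 => by rw [hPk k hk1 hk2]; ring)]
      rw [hPp, hPq]
    rw [Finset.sum_sub_distrib, h1] at hdiff
    have hsum : ∑ k, (P k)^2 = 1 + (m^2 - lam p^2) + (m^2 - lam q^2) := by linarith
    rw [hsum, hm]; ring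
  have hG2 : G^2 ≤ (lam p - lam q)^2 / 2 := by
    calc G^2 ≤ (|lam p - lam q| / Real.sqrt 2)^2 := pow_le_pow_left₀ hG0 hG 2
      _ = (lam p - lam q)^2 / 2 := by
          rw [div_pow, sq_abs, Real.sq_sqrt (by norm_num : (0:ℝ) ≤ 2)]
  have hPle : ∑ k, (P k)^2 ≤ 1 - G^2 := by rw [hB]; linarith
  have hcs : (∑ k, P k * nu k)^2 ≤ 1 - G^2 := by
    have h := Finset.sum_mul_sq_le_sq_mul_sq Finset.univ P nu
    rw [h2, mul_one] at h
    exact h.trans hPle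
  calc ∑ k, lam k * nu k = ∑ k, P k * nu k := hA
    _ ≤ |∑ k, P k * nu k| := le_abs_self _
    _ = Real.sqrt ((∑ k, P k * nu k)^2) := (Real.sqrt_sq_eq_abs _).symm
    _ ≤ Real.sqrt (1 - G^2) := Real.sqrt_le_sqrt hcs

lemma arccos_sqrt_one_sub_sq (G : ℝ) (hG0 : 0 ≤ G) (hG1 : G ≤ 1) :
    Real.arccos (Real.sqrt (1 - G^2)) = Real.arcsin G := by
  have h2 : (0:ℝ) ≤ 1 - G^2 := by nlinarith
  have hs : Real.sin (Real.arccos (Real.sqrt (1 - G^2))) = G := by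
    rw [Real.sin_arccos, Real.sq_sqrt h2, show 1 - (1 - G^2) = G^2 by ring, Real.sqrt_sq hG0]
  have hhi : Real.arccos (Real.sqrt (1 - G^2)) ≤ Real.pi / 2 :=
    Real.arccos_le_pi_div_two.mpr (Real.sqrt_nonneg _)
  have hlo : -(Real.pi / 2) ≤ Real.arccos (Real.sqrt (1 - G^2)) := by
    linarith [Real.arccos_nonneg (Real.sqrt (1 - G^2)), Real.pi_pos]
  have h := Real.arcsin_sin hlo hhi
  rw [hs] at h
  exact h.symm

lemma arccos_le_arccos' {x y : ℝ} (h : x ≤ y) : Real.arccos y ≤ Real.arccos x := by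
  simp only [Real.arccos_eq_pi_div_two_sub_arcsin]
  have := Real.monotone_arcsin h
  linarith

lemma exists_nu (lam : Fin n → ℝ) (h1 : ∑ k, (lam k)^2 = 1) {p q : Fin n} (hpq : p ≠ q)
    {G : ℝ} (hG2 : G^2 = (lam p - lam q)^2 / 2) :
    ∃ nu : Fin n → ℝ, (∑ k, (nu k)^2 = 1) ∧ nu p = nu q ∧
      ∑ k, lam k * nu k = Real.sqrt (1 - G^2) := by
  set m := (lam p + lam q) / 2 with hm
  set P : Fin n → ℝ := fun k => if k = p ∨ k = q then m else lam k with hP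
  have hPp : P p = m := by simp [hP]
  have hPq : P q = m := by simp [hP]
  have hPk : ∀ k, k ≠ p → k ≠ q → P k = lam k := by
    intro k h1 h2; simp [hP, h1, h2]
  have hB : ∑ k, (P k)^2 = 1 - G^2 := by
    have hdiff : ∑ k, ((P k)^2 - (lam k)^2) = (m^2 - lam p^2) + (m^2 - lam q^2) := by
      rw [sum_pair_support hpq _ (fun k hk1 hk2 => by rw [hPk k hk1 hk2]; ring)]
      rw [hPp, hPq]
    rw [Finset.sum_sub_distrib, h1] at hdiff
    have hsum : ∑ k, (P k)^2 = 1 + (m^2 - lam p^2) + (m^2 - lam q^2) := by linarith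
    rw [hsum, hm, hG2]; ring
  have hlamP : ∑ k, lam k * P k = ∑ k, (P k)^2 := by
    have hdiff : ∑ k, (lam k * P k - (P k)^2) = 0 := by
      rw [sum_pair_support hpq _ (fun k hk1 hk2 => by rw [hPk k hk1 hk2]; ring)]
      rw [hPp, hPq, hm]; ring
    rw [Finset.sum_sub_distrib] at hdiff
    linarith
  set t := Real.sqrt (1 - G^2) with ht
  have h1G : (0:ℝ) ≤ 1 - G^2 := by rw [← hB]; positivity
  have ht2 : t^2 = 1 - G^2 := Real.sq_sqrt h1G
  by_cases h0 : t = 0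
  · have hBP : ∑ k, (P k)^2 = 0 := by rw [hB, ← ht2, h0]; ring
    have hPp0 : P p = 0 := by
      have h := (Finset.sum_eq_zero_iff_of_nonneg
        (fun i _ => sq_nonneg (P i))).mp hBP p (Finset.mem_univ p)
      exact sq_eq_zero_iff.mp h
    have hm0 : m = 0 := by rw [← hPp]; exact hPp0
    have hsum0 : lam p + lam q = 0 := by
      have := hm0
      rw [hm] at this
      linarith
    have hsq : ((Real.sqrt 2)⁻¹ : ℝ)^2 = 1/2 := by
      rw [inv_pow, Real.sq_sqrt (by norm_num : (0:ℝ) ≤ 2)]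
      norm_num
    refine ⟨fun k => if k = p ∨ k = q then (Real.sqrt 2)⁻¹ else 0, ?_, ?_, ?_⟩
    · rw [sum_pair_support hpq _ (fun k hk1 hk2 => by simp [hk1, hk2])]
      simp only [eq_self_iff_true, true_or, or_true, if_true]
      rw [hsq]; norm_num
    · simp
    · rw [sum_pair_support hpq _ (fun k hk1 hk2 => by simp [hk1, hk2])]
      simp only [eq_self_iff_true, true_or, or_true, if_true]
      rw [h0]
      calc lam p * (Real.sqrt 2)⁻¹ + lam q * (Real.sqrt 2)⁻¹
          = (lam p + lam q) * (Real.sqrt 2)⁻¹ := by ring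
        _ = 0 := by rw [hsum0, zero_mul]
  · have h1G0 : 1 - G^2 ≠ 0 := by
      intro h
      apply h0
      rw [ht, h, Real.sqrt_zero]
    refine ⟨fun k => P k / t, ?_, ?_, ?_⟩
    · simp only [div_pow]
      rw [← Finset.sum_div, hB, ht2, div_self h1G0]
    · simp only
      rw [hPp, hPq]
    · simp only [← mul_div_assoc]
      rw [← Finset.sum_div, hlamP, hB, ← ht2, pow_two, mul_div_assoc, div_self h0, mul_one]

end SphericalDistAux

open SphericalDistAux in
/-- for a unit-norm symmetric `A` with pairwise distinct eigenvalues,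
the spherical distance `min_{B ∈ Δ} arccos(tr(AB))` is attained and equals
`arcsin(min_{i<j} |λ_i - λ_j| / √2)`. -/
theorem spherical_dist_to_disc {n : ℕ} (hn : 2 ≤ n) (A : Matrix (Fin n) (Fin n) ℝ)
    (hA : A.IsHermitian) (hnorm : frobNorm A = 1)
    (hinj : Function.Injective hA.eigenvalues) :
    IsLeast {r : ℝ | ∃ B ∈ discSet n, r = Real.arccos (Matrix.trace (A * B))}
      (Real.arcsin (sInf {r : ℝ | ∃ i j : Fin n, i < j ∧
        r = |hA.eigenvalues i - hA.eigenvalues j| / Real.sqrt 2})) := by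
  have hAT : Aᵀ = A := by
    rw [← Matrix.conjTranspose_eq_transpose_of_trivial]; exact hA
  set lam := hA.eigenvalues with hlamdef
  set U := (hA.eigenvectorUnitary : Matrix (Fin n) (Fin n) ℝ) with hUdef
  have hU1 : U * Uᵀ = 1 := by
    have := Matrix.mem_unitaryGroup_iff.mp hA.eigenvectorUnitary.2
    rwa [Matrix.star_eq_conjTranspose, Matrix.conjTranspose_eq_transpose_of_trivial] at this
  have hU2 : Uᵀ * U = 1 := by
    have := Matrix.mem_unitaryGroup_iff'.mp hA.eigenvectorUnitary.2
    rwa [Matrix.star_eq_conjTranspose, Matrix.conjTranspose_eq_transpose_of_trivial] at this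
  have hspec : A = U * diagonal lam * Uᵀ := by
    have h := hA.spectral_theorem
    rw [Unitary.conjStarAlgAut_apply] at h
    rw [← Matrix.conjTranspose_eq_transpose_of_trivial, ← Matrix.star_eq_conjTranspose]
    convert h using 3 <;> rfl
  have hlam2 : ∑ k, lam k ^ 2 = 1 := by
    have htr : Matrix.trace (Aᵀ * A) = ∑ k, lam k * lam k := by
      rw [hAT]
      conv_lhs => rw [hspec]
      exact trace_conj_mul_same U hU2 lam lam
    have h1 : Real.sqrt (∑ k, lam k * lam k) = 1 := by
      rw [← htr]; rw [← frobNorm]; exact hnorm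
    have h2 := Real.sqrt_eq_one.mp h1
    simpa [pow_two] using h2
  set Sg : Set ℝ := {r : ℝ | ∃ i j : Fin n, i < j ∧
    r = |lam i - lam j| / Real.sqrt 2} with hSgdef
  set G := sInf Sg with hGdef
  have hfin : Sg.Finite := by
    apply Set.Finite.subset (Set.finite_range
      (fun p : Fin n × Fin n => |lam p.1 - lam p.2| / Real.sqrt 2))
    rintro r ⟨i, j, hij, rfl⟩
    exact ⟨(i, j), rfl⟩
  have hne : Sg.Nonempty := by
    refine ⟨|lam ⟨0, by omega⟩ - lam ⟨1, by omega⟩| / Real.sqrt 2,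
      ⟨0, by omega⟩, ⟨1, by omega⟩, ?_, rfl⟩
    simp [Fin.lt_def]
  have hG0 : 0 ≤ G := Real.sInf_nonneg (by rintro r ⟨i, j, hij, rfl⟩; positivity)
  have hGle : ∀ i j : Fin n, i ≠ j → G ≤ |lam i - lam j| / Real.sqrt 2 := by
    intro i j hij
    rcases lt_or_gt_of_ne hij with h | h
    · exact csInf_le hfin.bddBelow ⟨i, j, h, rfl⟩
    · rw [abs_sub_comm]; exact csInf_le hfin.bddBelow ⟨j, i, h, rfl⟩
  obtain ⟨p, q, hpq, hGeq⟩ := hne.csInf_mem hfin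
  have hpq' : p ≠ q := ne_of_lt hpq
  have hG2 : G^2 = (lam p - lam q)^2 / 2 := by
    rw [hGdef, hGeq, div_pow, sq_abs, Real.sq_sqrt (by norm_num : (0:ℝ) ≤ 2)]
  have hpq2 : lam p^2 + lam q^2 ≤ 1 := by
    rw [← hlam2]
    have h := Finset.sum_le_sum_of_subset_of_nonneg
      (Finset.subset_univ ({p, q} : Finset (Fin n)))
      (fun i _ _ => sq_nonneg (lam i))
    rwa [Finset.sum_pair hpq'] at h
  have hG1 : G ≤ 1 := by
    nlinarith [hG2, hpq2, hG0, sq_nonneg (G - 1), sq_nonneg (lam p + lam q)]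
  have h1G2 : (0:ℝ) ≤ 1 - G^2 := by
    nlinarith [hG2, hpq2, sq_nonneg (lam p + lam q)]
  -- the lower bound
  have hlb : ∀ r ∈ {r : ℝ | ∃ B ∈ discSet n, r = Real.arccos (Matrix.trace (A * B))},
      Real.arcsin G ≤ r := by
    rintro r ⟨B, ⟨hBs, hBn, hBrep⟩, rfl⟩
    have hBT : Bᵀ = B := hBs
    have hB : B.IsHermitian := by
      rw [Matrix.IsHermitian, Matrix.conjTranspose_eq_transpose_of_trivial]; exact hBT
    set μ := hB.eigenvalues with hmudef
    set V := (hB.eigenvectorUnitary : Matrix (Fin n) (Fin n) ℝ) with hVdef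
    have hV1 : V * Vᵀ = 1 := by
      have := Matrix.mem_unitaryGroup_iff.mp hB.eigenvectorUnitary.2
      rwa [Matrix.star_eq_conjTranspose, Matrix.conjTranspose_eq_transpose_of_trivial] at this
    have hV2 : Vᵀ * V = 1 := by
      have := Matrix.mem_unitaryGroup_iff'.mp hB.eigenvectorUnitary.2
      rwa [Matrix.star_eq_conjTranspose, Matrix.conjTranspose_eq_transpose_of_trivial] at this
    have hspecB : B = V * diagonal μ * Vᵀ := by
      have h := hB.spectral_theorem
      rw [Unitary.conjStarAlgAut_apply] at h
      rw [← Matrix.conjTranspose_eq_transpose_of_trivial, ← Matrix.star_eq_conjTranspose]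
      convert h using 3 <;> rfl
    have hmu2 : ∑ k, μ k ^ 2 = 1 := by
      have htr : Matrix.trace (Bᵀ * B) = ∑ k, μ k * μ k := by
        rw [hBT]
        conv_lhs => rw [hspecB]
        exact trace_conj_mul_same V hV2 μ μ
      have h1 : Real.sqrt (∑ k, μ k * μ k) = 1 := by
        rw [← htr, ← frobNorm]; exact hBn
      have h2 := Real.sqrt_eq_one.mp h1
      simpa [pow_two] using h2
    have hrep : ∃ i j : Fin n, i ≠ j ∧ μ i = μ j := by
      obtain ⟨ν₀, hν₀⟩ := hBrep
      have hcp : B.charpoly = (diagonal μ).charpoly := by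
        conv_lhs => rw [hspecB]
        exact charpoly_conj' V Vᵀ _ hV1
      rw [hcp, rootMult_diagonal] at hν₀
      obtain ⟨i, j, hij, hi, hj⟩ := (count_ge_two_iff μ ν₀).mp hν₀
      exact ⟨i, j, hij, hi.trans hj.symm⟩
    obtain ⟨i0, j0, hij0, hmueq⟩ := hrep
    set W := Uᵀ * V with hWdef
    have hWrow : ∀ k, ∑ i, (W k i)^2 = 1 := by
      intro k
      have hWWT : W * Wᵀ = 1 := by
        rw [hWdef, Matrix.transpose_mul, Matrix.transpose_transpose]
        calc Uᵀ * V * (Vᵀ * U) = Uᵀ * (V * Vᵀ) * U := by simp only [Matrix.mul_assoc]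
          _ = 1 := by rw [hV1, Matrix.mul_one, hU2]
      calc ∑ i, (W k i)^2 = ∑ i, W k i * Wᵀ i k := by
            refine Finset.sum_congr rfl fun i _ => ?_
            rw [Matrix.transpose_apply, pow_two]
        _ = (W * Wᵀ) k k := (Matrix.mul_apply).symm
        _ = 1 := by rw [hWWT, Matrix.one_apply_eq]
    have hWcol : ∀ i, ∑ k, (W k i)^2 = 1 := by
      intro i
      have hWTW : Wᵀ * W = 1 := by
        rw [hWdef, Matrix.transpose_mul, Matrix.transpose_transpose]
        calc Vᵀ * U * (Uᵀ * V) = Vᵀ * (U * Uᵀ) * V := by simp only [Matrix.mul_assoc]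
          _ = 1 := by rw [hU1, Matrix.mul_one, hV2]
      calc ∑ k, (W k i)^2 = ∑ k, Wᵀ i k * W k i := by
            refine Finset.sum_congr rfl fun k _ => ?_
            rw [Matrix.transpose_apply, pow_two]
        _ = (Wᵀ * W) i i := (Matrix.mul_apply).symm
        _ = 1 := by rw [hWTW, Matrix.one_apply_eq]
    have hS : Matrix.of (fun k i => (W k i)^2) ∈ doublyStochastic ℝ (Fin n) := by
      rw [mem_doublyStochastic_iff_sum]
      exact ⟨fun i j => sq_nonneg _, fun i => hWrow i, fun j => hWcol j⟩
    obtain ⟨w, hw0, hw1, hwS⟩ := exists_eq_sum_perm_of_mem_doublyStochastic hS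
    have hSki : ∀ k i, (W k i)^2
        = ∑ σ : Equiv.Perm (Fin n), w σ * (σ.permMatrix ℝ) k i := by
      intro k i
      have h := congrFun (congrFun hwS k) i
      simp only [Matrix.sum_apply, Matrix.smul_apply, smul_eq_mul, Matrix.of_apply] at h
      exact h.symm
    have hperm : ∀ (σ : Equiv.Perm (Fin n)) k,
        ∑ i, lam k * μ i * (w σ * (σ.permMatrix ℝ) k i) = w σ * (lam k * μ (σ k)) := by
      intro σ k
      rw [Finset.sum_eq_single (σ k)]
      · simp only [Equiv.Perm.permMatrix, PEquiv.toMatrix_apply, Equiv.toPEquiv_apply,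
          Option.mem_def, Option.some.injEq, eq_self_iff_true, if_true]
        ring
      · intro b _ hb
        simp only [Equiv.Perm.permMatrix, PEquiv.toMatrix_apply, Equiv.toPEquiv_apply,
          Option.mem_def, Option.some.injEq]
        rw [if_neg (by exact fun h => hb h.symm)]
        ring
      · simp
    have htrAB : Matrix.trace (A * B) = ∑ σ : Equiv.Perm (Fin n),
        w σ * ∑ k, lam k * μ (σ k) := by
      conv_lhs => rw [hspec, hspecB]
      rw [trace_conj_mul, ← hWdef]
      calc ∑ k, ∑ i, lam k * μ i * (W k i)^2
          = ∑ k, ∑ i, ∑ σ : Equiv.Perm (Fin n),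
              lam k * μ i * (w σ * (σ.permMatrix ℝ) k i) := by
            refine Finset.sum_congr rfl fun k _ => Finset.sum_congr rfl fun i _ => ?_
            rw [hSki k i, Finset.mul_sum]
        _ = ∑ k, ∑ σ : Equiv.Perm (Fin n), ∑ i,
              lam k * μ i * (w σ * (σ.permMatrix ℝ) k i) := by
            refine Finset.sum_congr rfl fun k _ => ?_
            exact Finset.sum_comm
        _ = ∑ σ : Equiv.Perm (Fin n), ∑ k, ∑ i,
              lam k * μ i * (w σ * (σ.permMatrix ℝ) k i) := Finset.sum_comm
        _ = ∑ σ : Equiv.Perm (Fin n), w σ * ∑ k, lam k * μ (σ k) := by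
            refine Finset.sum_congr rfl fun σ _ => ?_
            rw [Finset.mul_sum]
            exact Finset.sum_congr rfl fun k _ => hperm σ k
    have hbound : ∀ σ : Equiv.Perm (Fin n),
        ∑ k, lam k * μ (σ k) ≤ Real.sqrt (1 - G^2) := by
      intro σ
      refine key_scalar lam (fun k => μ (σ k)) hlam2 ?_ (p := σ⁻¹ i0) (q := σ⁻¹ j0)
        ?_ ?_ hG0 (hGle _ _ ?_)
      · exact (Equiv.sum_comp σ fun i => μ i ^ 2).trans hmu2
      · intro h
        exact hij0 (by simpa using congrArg σ h)
      · simp only [Equiv.Perm.inv_def, Equiv.apply_symm_apply]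
        exact hmueq
      · intro h
        exact hij0 (by simpa using congrArg σ h)
    have htr_le : Matrix.trace (A * B) ≤ Real.sqrt (1 - G^2) := by
      rw [htrAB]
      calc ∑ σ : Equiv.Perm (Fin n), w σ * ∑ k, lam k * μ (σ k)
          ≤ ∑ σ : Equiv.Perm (Fin n), w σ * Real.sqrt (1 - G^2) :=
            Finset.sum_le_sum fun σ _ =>
              mul_le_mul_of_nonneg_left (hbound σ) (hw0 σ)
        _ = Real.sqrt (1 - G^2) := by rw [← Finset.sum_mul, hw1, one_mul]
    calc Real.arcsin G = Real.arccos (Real.sqrt (1 - G^2)) :=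
          (arccos_sqrt_one_sub_sq G hG0 hG1).symm
      _ ≤ Real.arccos (Matrix.trace (A * B)) := arccos_le_arccos' htr_le
  constructor
  · -- membership: construct the minimizer
    obtain ⟨ν, hν1, hνpq, hνlam⟩ := exists_nu lam hlam2 hpq' hG2
    have hsymB : (U * diagonal ν * Uᵀ)ᵀ = U * diagonal ν * Uᵀ := by
      simp only [Matrix.transpose_mul, Matrix.transpose_transpose,
        Matrix.diagonal_transpose, Matrix.mul_assoc]
    refine ⟨U * diagonal ν * Uᵀ, ⟨hsymB, ?_, ?_⟩, ?_⟩
    · rw [frobNorm, hsymB, trace_conj_mul_same U hU2 ν ν,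
        show ∑ k, ν k * ν k = 1 by simpa [pow_two] using hν1]
      exact Real.sqrt_one
    · refine ⟨ν p, ?_⟩
      have hcp : (U * diagonal ν * Uᵀ).charpoly = (diagonal ν).charpoly :=
        charpoly_conj' U Uᵀ _ hU1
      rw [hcp, rootMult_diagonal]
      exact (count_ge_two_iff ν (ν p)).mpr ⟨p, q, hpq', rfl, hνpq.symm⟩
    · have htr : Matrix.trace (A * (U * diagonal ν * Uᵀ)) = ∑ k, lam k * ν k := by
        conv_lhs => rw [hspec]
        exact trace_conj_mul_same U hU2 lam ν
      rw [htr, hνlam]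
      exact (arccos_sqrt_one_sub_sq G hG0 hG1).symm
  · exact fun r hr => hlb r hr
end
end

section
/- For every integer j ≥ 0, ∫_ℝ det X_j(u) · e^{−u²} du = 2^{2j+1} (2j)! √π (4j+1), where X_j(u) is the 2×2 matrix with rows ( H_{2j}(u), H_{2j}′(u) ) and ( H_{2j+1}(u) − H_{2j}′(u), H_{2j+1}′(u) − H_{2j}″(u) ). -/
open MeasureTheory Matrix
open scoped ENNReal

noncomputable section

/-- The physicist's Hermite polynomial `H_i(x) = (-1)^i e^{x²} (d/dx)^i e^{-x²}`. -/
def physHermite (i : ℕ) : ℝ → ℝ :=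
  fun x => (-1 : ℝ) ^ i * Real.exp (x ^ 2) * iteratedDeriv i (fun t => Real.exp (-t ^ 2)) x

/-- The matrix `X_j(u)`. -/
def Xmat (j : ℕ) (u : ℝ) : Matrix (Fin 2) (Fin 2) ℝ :=
  !![physHermite (2 * j) u, deriv (physHermite (2 * j)) u;
     physHermite (2 * j + 1) u - deriv (physHermite (2 * j)) u,
     deriv (physHermite (2 * j + 1)) u - deriv (deriv (physHermite (2 * j))) u]

open Polynomial

def Q : ℕ → Polynomial ℝ
  | 0 => 1
  | n + 1 => C 2 * X * Q n - derivative (Q n)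

lemma iter_gauss (n : ℕ) : iteratedDeriv n (fun t : ℝ => Real.exp (-t ^ 2)) =
    fun x => (-1 : ℝ) ^ n * (Q n).eval x * Real.exp (-x ^ 2) := by
  induction n with
  | zero => funext x; simp [Q]
  | succ n ih =>
    funext x
    rw [iteratedDeriv_succ, ih]
    have h1 : HasDerivAt (fun x : ℝ => Real.exp (-x ^ 2)) (Real.exp (-x ^ 2) * -(2 * x)) x := by
      simpa using ((hasDerivAt_pow 2 x).neg).exp
    have h2 : HasDerivAt (fun x : ℝ => (Q n).eval x) ((derivative (Q n)).eval x) x :=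
      (Q n).hasDerivAt x
    have h3 : HasDerivAt (fun x : ℝ => (-1 : ℝ) ^ n * (Q n).eval x * Real.exp (-x ^ 2))
        ((-1 : ℝ) ^ n * ((derivative (Q n)).eval x * Real.exp (-x ^ 2) +
          (Q n).eval x * (Real.exp (-x ^ 2) * -(2 * x)))) x := by
      simpa [mul_assoc] using ((h2.mul h1).const_mul ((-1 : ℝ) ^ n))
    rw [h3.deriv]
    show _ = (-1:ℝ)^(n+1) * (C 2 * X * Q n - derivative (Q n)).eval x * Real.exp (-x^2)
    simp only [eval_sub, eval_mul, eval_C, eval_X, pow_succ]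
    ring

lemma physHermite_eq (n : ℕ) :
    (fun x => (-1 : ℝ) ^ n * Real.exp (x ^ 2) * iteratedDeriv n (fun t => Real.exp (-t ^ 2)) x)
      = fun x => (Q n).eval x := by
  funext x
  rw [iter_gauss]
  rw [show (-1:ℝ)^n * Real.exp (x^2) * ((-1:ℝ)^n * (Q n).eval x * Real.exp (-x^2))
      = ((-1:ℝ)*(-1))^n * (Real.exp (x^2) * Real.exp (-x^2)) * (Q n).eval x by
    rw [mul_pow]; ring]
  rw [← Real.exp_add]
  simp

lemma derivative_Q : ∀ n : ℕ, derivative (Q (n + 1)) = C (2 * (n + 1) : ℝ) * Q n := by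
  intro n
  induction n with
  | zero => simp [Q]
  | succ n ih =>
    show derivative (C 2 * X * Q (n+1) - derivative (Q (n+1))) = _
    rw [derivative_sub, derivative_mul, derivative_mul, derivative_C, derivative_X, ih,
      derivative_mul, derivative_C]
    have hb : (C (2 * (↑(n+1) + 1) : ℝ) : Polynomial ℝ) = C (2 * (↑n + 1) : ℝ) + C 2 := by
      rw [← C_add]; push_cast; ring_nf
    rw [hb, show Q (n+1) = C 2 * X * Q n - derivative (Q n) from rfl]
    ring

lemma integrable_poly_gauss (p : Polynomial ℝ) :
    Integrable (fun x : ℝ => p.eval x * Real.exp (-x ^ 2)) := by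
  induction p using Polynomial.induction_on' with
  | monomial n c =>
      simp only [eval_monomial]
      have h : Integrable (fun x : ℝ => x ^ n * Real.exp (-x ^ 2)) := by
        have := integrable_rpow_mul_exp_neg_mul_sq (b := 1) one_pos
          (s := (n : ℝ)) (lt_of_lt_of_le neg_one_lt_zero (Nat.cast_nonneg n))
        simpa [Real.rpow_natCast, neg_mul, one_mul] using this
      simpa [mul_assoc] using h.const_mul c
  | add p q hp hq => simpa [add_mul] using hp.fun_add hq

lemma tendsto_poly_gauss_atTop (p : Polynomial ℝ) :
    Filter.Tendsto (fun x : ℝ => p.eval x * Real.exp (-x ^ 2)) Filter.atTop (nhds 0) := by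
  have hg : Filter.Tendsto (fun x : ℝ => |p.eval x / Real.exp x|) Filter.atTop (nhds 0) := by
    simpa using (p.tendsto_div_exp_atTop).abs
  apply squeeze_zero_norm' _ hg
  filter_upwards [Filter.eventually_ge_atTop (1 : ℝ)] with x hx
  have h1 : Real.exp (-x ^ 2) ≤ Real.exp (-x) := Real.exp_le_exp.2 (by nlinarith)
  rw [Real.norm_eq_abs, abs_mul, abs_of_pos (Real.exp_pos _)]
  calc |p.eval x| * Real.exp (-x ^ 2) ≤ |p.eval x| * Real.exp (-x) :=
        mul_le_mul_of_nonneg_left h1 (abs_nonneg _)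
    _ = |p.eval x / Real.exp x| := by
        rw [abs_div, abs_of_pos (Real.exp_pos x), Real.exp_neg, div_eq_mul_inv]

lemma tendsto_poly_gauss_atBot (p : Polynomial ℝ) :
    Filter.Tendsto (fun x : ℝ => p.eval x * Real.exp (-x ^ 2)) Filter.atBot (nhds 0) := by
  have := (tendsto_poly_gauss_atTop (p.comp (-X))).comp Filter.tendsto_neg_atBot_atTop
  simpa [Function.comp_def, eval_comp] using this

def Ig (p : Polynomial ℝ) : ℝ := ∫ x : ℝ, p.eval x * Real.exp (-x ^ 2)

lemma Ig_deriv_part (p : Polynomial ℝ) : Ig (derivative p - C 2 * X * p) = 0 := by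
  have hderiv : ∀ x : ℝ, HasDerivAt (fun x => p.eval x * Real.exp (-x ^ 2))
      ((derivative p - C 2 * X * p).eval x * Real.exp (-x ^ 2)) x := by
    intro x
    have h1 : HasDerivAt (fun x : ℝ => Real.exp (-x ^ 2)) (Real.exp (-x ^ 2) * -(2 * x)) x := by
      simpa using ((hasDerivAt_pow 2 x).neg).exp
    have h2 := (p.hasDerivAt x).fun_mul h1
    refine h2.congr_deriv ?_
    simp only [eval_sub, eval_mul, eval_C, eval_X]
    ring
  have := MeasureTheory.integral_of_hasDerivAt_of_tendsto hderiv
      (integrable_poly_gauss _) (tendsto_poly_gauss_atBot p) (tendsto_poly_gauss_atTop p)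
  simpa [Ig] using this

lemma Ig_add (p q : Polynomial ℝ) : Ig (p + q) = Ig p + Ig q := by
  unfold Ig
  simp only [eval_add, add_mul]
  exact integral_add (integrable_poly_gauss p) (integrable_poly_gauss q)

lemma Ig_sub (p q : Polynomial ℝ) : Ig (p - q) = Ig p - Ig q := by
  unfold Ig
  simp only [eval_sub, sub_mul]
  exact integral_sub (integrable_poly_gauss p) (integrable_poly_gauss q)

lemma Ig_const_mul (c : ℝ) (p : Polynomial ℝ) : Ig (C c * p) = c * Ig p := by
  unfold Ig
  simp only [eval_mul, eval_C, mul_assoc]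
  exact integral_const_mul c _

lemma Ig_zero : Ig 0 = 0 := by simp [Ig]

lemma Ig_one : Ig 1 = Real.sqrt Real.pi := by
  unfold Ig
  simpa [neg_mul, one_mul] using integral_gaussian 1

lemma Ig_Q (n : ℕ) : Ig (Q n) = if n = 0 then Real.sqrt Real.pi else 0 := by
  cases n with
  | zero => simpa [Q] using Ig_one
  | succ k =>
    have h : Q (k + 1) = -(derivative (Q k) - C 2 * X * Q k) := by
      rw [show Q (k+1) = C 2 * X * Q k - derivative (Q k) from rfl]; ring
    have := Ig_deriv_part (Q k)
    simp only [Nat.succ_ne_zero, if_false]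
    rw [h, show -(derivative (Q k) - C 2 * X * Q k) = 0 - (derivative (Q k) - C 2 * X * Q k) by ring,
      Ig_sub, Ig_zero, this]
    ring

lemma Ig_mul_Q_succ (p : Polynomial ℝ) (n : ℕ) :
    Ig (p * Q (n + 1)) = Ig (derivative p * Q n) := by
  have key := Ig_deriv_part (p * Q n)
  have h : p * Q (n + 1) = derivative p * Q n - (derivative (p * Q n) - C 2 * X * (p * Q n)) := by
    rw [show Q (n+1) = C 2 * X * Q n - derivative (Q n) from rfl, derivative_mul]; ring
  rw [h, Ig_sub, key, sub_zero]

lemma Ig_Q_mul_Q (n : ℕ) : ∀ m : ℕ, Ig (Q m * Q n) =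
    if m = n then 2 ^ n * (Nat.factorial n : ℝ) * Real.sqrt Real.pi else 0 := by
  induction n with
  | zero =>
    intro m
    rw [show Q 0 = 1 from rfl, mul_one, Ig_Q]
    rcases eq_or_ne m 0 with h | h <;> simp [h]
  | succ n ih =>
    intro m
    rw [Ig_mul_Q_succ]
    cases m with
    | zero =>
      rw [show derivative (Q 0) = 0 by simp [Q], zero_mul, Ig_zero]
      simp
    | succ m =>
      rw [derivative_Q m, mul_assoc, Ig_const_mul, ih m]
      rcases eq_or_ne m n with h | h
      · subst h
        simp only [if_pos rfl]
        rw [Nat.factorial_succ]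
        push_cast
        ring
      · simp [h, fun hc : m + 1 = n + 1 => h (Nat.succ_injective hc)]

lemma physHermite_poly (n : ℕ) : physHermite n = fun x => (Q n).eval x := physHermite_eq n

lemma deriv_physHermite_poly (n : ℕ) :
    deriv (physHermite n) = fun x => (derivative (Q n)).eval x := by
  funext x
  rw [physHermite_poly]
  exact ((Q n).hasDerivAt x).deriv

lemma deriv2_physHermite_poly (n : ℕ) :
    deriv (deriv (physHermite n)) = fun x => (derivative (derivative (Q n))).eval x := by
  funext x
  rw [deriv_physHermite_poly]
  exact ((derivative (Q n)).hasDerivAt x).deriv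

/-- for every `j ≥ 0`,
`∫_ℝ det X_j(u) e^{-u²} du = 2^{2j+1} (2j)! √π (4j+1)`. -/
theorem integral_det_Xmat (j : ℕ) :
    (∫ u : ℝ, (Xmat j u).det * Real.exp (-u ^ 2)) =
      2 ^ (2 * j + 1) * (Nat.factorial (2 * j) : ℝ) * Real.sqrt Real.pi *
        (4 * (j : ℝ) + 1) := by

  set R : Polynomial ℝ :=
    Q (2 * j) * (derivative (Q (2 * j + 1)) - derivative (derivative (Q (2 * j)))) -
      derivative (Q (2 * j)) * (Q (2 * j + 1) - derivative (Q (2 * j))) with hRdef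
  have hdet : ∀ u : ℝ, (Xmat j u).det = R.eval u := by
    intro u
    rw [Xmat, Matrix.det_fin_two_of, deriv2_physHermite_poly (2 * j),
      deriv_physHermite_poly (2 * j), deriv_physHermite_poly (2 * j + 1),
      physHermite_poly (2 * j), physHermite_poly (2 * j + 1), hRdef]
    simp only [eval_sub, eval_mul]
    
  have hInt : (∫ u : ℝ, (Xmat j u).det * Real.exp (-u ^ 2)) = Ig R := by
    unfold Ig
    congr 1
    funext u
    rw [hdet]
  rw [hInt]
  cases j with
  | zero =>
    have hQ0 : Q 0 = 1 := rfl
    have hd0 : derivative (Q 0) = 0 := by rw [hQ0]; simp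
    have hR : R = C 2 * (Q 0 * Q 0) := by
      rw [hRdef]
      simp only [Nat.mul_zero, Nat.zero_add, hd0, derivative_Q 0, derivative_zero]
      rw [hQ0]
      push_cast
      ring
    rw [hR, Ig_const_mul, Ig_Q_mul_Q 0 0]
    simp [Nat.factorial]
  | succ k =>
    have e1 : 2 * (k + 1) = (2 * k + 1) + 1 := by ring
    have e2 : 2 * (k + 1) + 1 = (2 * k + 2) + 1 := by ring
    have dB : derivative (Q (2 * (k + 1) + 1)) = C (2 * (2 * k + 3) : ℝ) * Q (2 * k + 2) := by
      rw [e2, derivative_Q (2 * k + 2)]; push_cast; ring_nf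
    have dA : derivative (Q (2 * (k + 1))) = C (2 * (2 * k + 2) : ℝ) * Q (2 * k + 1) := by
      rw [e1, derivative_Q (2 * k + 1)]; push_cast; ring_nf
    have dA2 : derivative (derivative (Q (2 * (k + 1)))) =
        C (2 * (2 * k + 2) : ℝ) * (C (2 * (2 * k + 1) : ℝ) * Q (2 * k)) := by
      rw [dA, derivative_mul, derivative_C, zero_mul, zero_add,
        show (2 * k + 1 : ℕ) = (2 * k) + 1 from rfl, derivative_Q (2 * k)]
      push_cast; ring_nf
    have hB : Q (2 * (k + 1) + 1) = Q (2 * k + 3) := by congr 1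
    have hA : Q (2 * (k + 1)) = Q (2 * k + 2) := by congr 1
    have hR : R =
        C (2 * (2 * k + 3) : ℝ) * (Q (2 * k + 2) * Q (2 * k + 2)) -
        C ((2 * (2 * k + 2)) * (2 * (2 * k + 1)) : ℝ) * (Q (2 * k + 2) * Q (2 * k)) -
        C (2 * (2 * k + 2) : ℝ) * (Q (2 * k + 1) * Q (2 * k + 3)) +
        C ((2 * (2 * k + 2)) * (2 * (2 * k + 2)) : ℝ) * (Q (2 * k + 1) * Q (2 * k + 1)) := by
      rw [hRdef, dB, dA2, dA, hB, hA]
      simp only [C_mul]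
      ring
    rw [hR, Ig_add, Ig_sub, Ig_sub, Ig_const_mul, Ig_const_mul, Ig_const_mul, Ig_const_mul,
      Ig_Q_mul_Q _ (2 * k + 2), Ig_Q_mul_Q _ (2 * k + 2), Ig_Q_mul_Q (2 * k + 3) (2 * k + 1),
      Ig_Q_mul_Q (2 * k + 1) (2 * k + 1)]
    have h1 : ¬ (2 * k + 2 = 2 * k) := by omega
    have h2 : ¬ (2 * k + 1 = 2 * k + 3) := by omega
    rw [if_pos rfl, if_pos rfl, if_neg h1, if_neg h2]
    have hfact : (Nat.factorial (2 * (k + 1)) : ℝ) =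
        (2 * k + 2 : ℝ) * (Nat.factorial (2 * k + 1) : ℝ) := by
      rw [show 2 * (k + 1) = (2 * k + 1) + 1 from by ring, Nat.factorial_succ]
      push_cast; ring
    have hfact2 : (Nat.factorial (2 * k + 2) : ℝ) =
        (2 * k + 2 : ℝ) * (Nat.factorial (2 * k + 1) : ℝ) := by
      rw [show 2 * k + 2 = (2 * k + 1) + 1 from rfl, Nat.factorial_succ]
      push_cast; ring
    have hpow : (2 : ℝ) ^ (2 * (k + 1) + 1) = 2 ^ (2 * k + 1) * 4 := by
      rw [show 2 * (k + 1) + 1 = (2 * k + 1) + 2 from by ring, pow_add]; norm_num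
    have hpow2 : (2 : ℝ) ^ (2 * k + 2) = 2 ^ (2 * k + 1) * 2 := by
      rw [pow_succ]
    rw [hfact, hfact2, hpow, hpow2]
    push_cast
    ring
end
end
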